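/- Let the system F_j(x,u(x),Du_j(x),D²u_j(x)) = 0, j = 1,…,m₁+m₂, be degenerate elliptic and balanced quasi-monotone. If (u₁,u₂) and (v₁,v₂) are super-sub solutions in Ω, then the function (w₁,w₂) defined componentwise by w₁(x) = min(u₁(x),v₁(x)) and w₂(x) = max(u₂(x),v₂(x)) is also a super-sub solution in Ω. -/

import Mathlib

open Filter Topology Matrix Bornology

noncomputable section

/-- Euclidean space ℝⁿ. -/
abbrev En (n : ℕ) := EuclideanSpace ℝ (Fin n)

/-- n×n real matrices (the symmetric ones model 𝒮ⁿ). -/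
abbrev Symn (n : ℕ) := Matrix (Fin n) (Fin n) ℝ

/-- Loewner order: `X ≤ Y` iff `Y - X` is positive semidefinite. -/
def LoewnerLE {ι : Type*} [Fintype ι] (X Y : Matrix ι ι ℝ) : Prop := (Y - X).PosSemidef

/-- Upper semicontinuous envelope relative to Ω: f*(x) = limsup_{Ω ∋ y → x} f(y). -/
def uEnv {n : ℕ} (Ω : Set (En n)) (f : En n → ℝ) (x : En n) : ℝ := limsup f (𝓝[Ω] x)

/-- Lower semicontinuous envelope relative to Ω: f_*(x) = liminf_{Ω ∋ y → x} f(y). -/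
def lEnv {n : ℕ} (Ω : Set (En n)) (f : En n → ℝ) (x : En n) : ℝ := liminf f (𝓝[Ω] x)

/-- φ touches f from above at x (within Ω). -/
def TouchAbove {n : ℕ} (Ω : Set (En n)) (φ f : En n → ℝ) (x : En n) : Prop :=
  φ x = f x ∧ ∃ N : Set (En n), IsOpen N ∧ x ∈ N ∧ ∀ y ∈ (N ∩ Ω) \ {x}, f y < φ y

/-- φ touches f from below at x (within Ω). -/
def TouchBelow {n : ℕ} (Ω : Set (En n)) (φ f : En n → ℝ) (x : En n) : Prop :=
  φ x = f x ∧ ∃ N : Set (En n), IsOpen N ∧ x ∈ N ∧ ∀ y ∈ (N ∩ Ω) \ {x}, φ y < f y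

/-- Hessian matrix D²φ(x) of a scalar function. -/
def hess {n : ℕ} (φ : En n → ℝ) (x : En n) : Symn n :=
  Matrix.of fun i j =>
    iteratedFDeriv ℝ 2 φ x ![EuclideanSpace.single i 1, EuclideanSpace.single j 1]

/-- The type of the operators F_j(x, r, s, p, X). -/
abbrev Op (n m₁ m₂ : ℕ) :=
  En n → (Fin m₁ → ℝ) → (Fin m₂ → ℝ) → En n → Symn n → ℝ

/-- Continuity of an operator on Ω × ℝ^{m₁} × ℝ^{m₂} × ℝⁿ × 𝒮ⁿ. -/
def OpContinuousOn {n m₁ m₂ : ℕ} (Ω : Set (En n)) (F : Op n m₁ m₂) : Prop :=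
  ContinuousOn (fun q : En n × (Fin m₁ → ℝ) × (Fin m₂ → ℝ) × En n × Symn n =>
      F q.1 q.2.1 q.2.2.1 q.2.2.2.1 q.2.2.2.2)
    (Ω ×ˢ (Set.univ : Set ((Fin m₁ → ℝ) × (Fin m₂ → ℝ) × En n × Symn n)))

/-- Degenerate ellipticity of an operator. -/
def DegElliptic {n m₁ m₂ : ℕ} (Ω : Set (En n)) (F : Op n m₁ m₂) : Prop :=
  ∀ x ∈ Ω, ∀ (r : Fin m₁ → ℝ) (s : Fin m₂ → ℝ) (p : En n) (X Y : Symn n),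
    X.IsSymm → Y.IsSymm → LoewnerLE X Y → F x r s p Y ≤ F x r s p X

/-- Balanced quasi-monotonicity of the system (F1, F2). -/
def BalancedQM {n m₁ m₂ : ℕ} (Ω : Set (En n))
    (F1 : Fin m₁ → Op n m₁ m₂) (F2 : Fin m₂ → Op n m₁ m₂) : Prop :=
  (∀ j, ∀ x ∈ Ω, ∀ (r : Fin m₁ → ℝ) (s σ : Fin m₂ → ℝ) (p : En n) (X : Symn n), X.IsSymm →
      (∀ i, s i ≤ σ i) → F1 j x r s p X ≤ F1 j x r σ p X) ∧
  (∀ j, ∀ x ∈ Ω, ∀ (r ρ : Fin m₁ → ℝ) (s : Fin m₂ → ℝ) (p : En n) (X : Symn n), X.IsSymm →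
      (∀ i, r i ≤ ρ i) → r j = ρ j → F1 j x ρ s p X ≤ F1 j x r s p X) ∧
  (∀ j, ∀ x ∈ Ω, ∀ (r ρ : Fin m₁ → ℝ) (s : Fin m₂ → ℝ) (p : En n) (X : Symn n), X.IsSymm →
      (∀ i, r i ≤ ρ i) → F2 j x r s p X ≤ F2 j x ρ s p X) ∧
  (∀ j, ∀ x ∈ Ω, ∀ (r : Fin m₁ → ℝ) (s σ : Fin m₂ → ℝ) (p : En n) (X : Symn n), X.IsSymm →
      (∀ i, s i ≤ σ i) → s j = σ j → F2 j x r σ p X ≤ F2 j x r s p X)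

/-- Boundedness of a vector-valued function on Ω. -/
def BddOn {n m : ℕ} (Ω : Set (En n)) (u : En n → Fin m → ℝ) : Prop :=
  ∃ M : ℝ, ∀ x ∈ Ω, ∀ i, |u x i| ≤ M

/-- (u1, u2) is a super-sub solution of the system (F1, F2) in Ω. -/
def SuperSub {n m₁ m₂ : ℕ} (Ω : Set (En n))
    (F1 : Fin m₁ → Op n m₁ m₂) (F2 : Fin m₂ → Op n m₁ m₂)
    (u1 : En n → Fin m₁ → ℝ) (u2 : En n → Fin m₂ → ℝ) : Prop :=
  BddOn Ω u1 ∧ BddOn Ω u2 ∧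
  (∀ j, ∀ x ∈ Ω, ∀ φ : En n → ℝ, ContDiff ℝ 2 φ →
      TouchBelow Ω φ (lEnv Ω fun y => u1 y j) x →
      0 ≤ F1 j x (fun i => lEnv Ω (fun y => u1 y i) x) (fun i => uEnv Ω (fun y => u2 y i) x)
            (gradient φ x) (hess φ x)) ∧
  (∀ j, ∀ x ∈ Ω, ∀ φ : En n → ℝ, ContDiff ℝ 2 φ →
      TouchAbove Ω φ (uEnv Ω fun y => u2 y j) x →
      F2 j x (fun i => lEnv Ω (fun y => u1 y i) x) (fun i => uEnv Ω (fun y => u2 y i) x)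
          (gradient φ x) (hess φ x) ≤ 0)

/-- (u1, u2) is a sub-super solution of the system (F1, F2) in Ω. -/
def SubSuper {n m₁ m₂ : ℕ} (Ω : Set (En n))
    (F1 : Fin m₁ → Op n m₁ m₂) (F2 : Fin m₂ → Op n m₁ m₂)
    (u1 : En n → Fin m₁ → ℝ) (u2 : En n → Fin m₂ → ℝ) : Prop :=
  BddOn Ω u1 ∧ BddOn Ω u2 ∧
  (∀ j, ∀ x ∈ Ω, ∀ φ : En n → ℝ, ContDiff ℝ 2 φ →
      TouchAbove Ω φ (uEnv Ω fun y => u1 y j) x →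
      F1 j x (fun i => uEnv Ω (fun y => u1 y i) x) (fun i => lEnv Ω (fun y => u2 y i) x)
          (gradient φ x) (hess φ x) ≤ 0) ∧
  (∀ j, ∀ x ∈ Ω, ∀ φ : En n → ℝ, ContDiff ℝ 2 φ →
      TouchBelow Ω φ (lEnv Ω fun y => u2 y j) x →
      0 ≤ F2 j x (fun i => uEnv Ω (fun y => u1 y i) x) (fun i => lEnv Ω (fun y => u2 y i) x)
            (gradient φ x) (hess φ x))


lemma liminf_min_aux {α : Type*} {l : Filter α} [l.NeBot] {f g : α → ℝ}
    (hfu : IsBoundedUnder (· ≤ ·) l f) (hfl : IsBoundedUnder (· ≥ ·) l f)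
    (hgu : IsBoundedUnder (· ≤ ·) l g) (hgl : IsBoundedUnder (· ≥ ·) l g) :
    liminf (fun y => min (f y) (g y)) l = min (liminf f l) (liminf g l) := by
  have hmu : IsBoundedUnder (· ≤ ·) l (fun y => min (f y) (g y)) := by
    obtain ⟨b, hb⟩ := hfu
    exact ⟨b, eventually_map.2 <| (eventually_map.1 hb).mono fun y hy => min_le_of_left_le hy⟩
  have hml : IsBoundedUnder (· ≥ ·) l (fun y => min (f y) (g y)) := by
    obtain ⟨a, ha⟩ := hfl; obtain ⟨b, hb⟩ := hgl
    refine ⟨min a b, eventually_map.2 ?_⟩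
    filter_upwards [eventually_map.1 ha, eventually_map.1 hb] with y h1 h2
    exact le_min (le_trans (min_le_left _ _) h1) (le_trans (min_le_right _ _) h2)
  apply le_antisymm
  · exact le_min
      (liminf_le_liminf (Eventually.of_forall fun y => min_le_left _ _) hml
        hfu.isCoboundedUnder_ge)
      (liminf_le_liminf (Eventually.of_forall fun y => min_le_right _ _) hml
        hgu.isCoboundedUnder_ge)
  · apply le_of_forall_pos_le_add
    intro ε hε
    have h1 : ∀ᶠ y in l, liminf f l - ε < f y :=
      eventually_lt_of_lt_liminf (by linarith) hfl
    have h2 : ∀ᶠ y in l, liminf g l - ε < g y :=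
      eventually_lt_of_lt_liminf (by linarith) hgl
    have h3 : min (liminf f l) (liminf g l) - ε ≤ liminf (fun y => min (f y) (g y)) l :=
      le_liminf_of_le hmu.isCoboundedUnder_ge (by
        filter_upwards [h1, h2] with y hy1 hy2
        exact le_min (by linarith [min_le_left (liminf f l) (liminf g l)])
          (by linarith [min_le_right (liminf f l) (liminf g l)]))
    linarith

lemma limsup_max_aux {α : Type*} {l : Filter α} [l.NeBot] {f g : α → ℝ}
    (hfu : IsBoundedUnder (· ≤ ·) l f) (hfl : IsBoundedUnder (· ≥ ·) l f)
    (hgu : IsBoundedUnder (· ≤ ·) l g) (hgl : IsBoundedUnder (· ≥ ·) l g) :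
    limsup (fun y => max (f y) (g y)) l = max (limsup f l) (limsup g l) := by
  have hmu : IsBoundedUnder (· ≤ ·) l (fun y => max (f y) (g y)) := by
    obtain ⟨a, ha⟩ := hfu; obtain ⟨b, hb⟩ := hgu
    refine ⟨max a b, eventually_map.2 ?_⟩
    filter_upwards [eventually_map.1 ha, eventually_map.1 hb] with y h1 h2
    exact max_le (le_trans h1 (le_max_left _ _)) (le_trans h2 (le_max_right _ _))
  have hml : IsBoundedUnder (· ≥ ·) l (fun y => max (f y) (g y)) := by
    obtain ⟨a, ha⟩ := hfl
    exact ⟨a, eventually_map.2 <| (eventually_map.1 ha).mono fun y hy =>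
      le_trans hy (le_max_left _ _)⟩
  apply le_antisymm
  · apply le_of_forall_pos_le_add
    intro ε hε
    have h1 : ∀ᶠ y in l, f y < limsup f l + ε :=
      eventually_lt_of_limsup_lt (by linarith) hfu
    have h2 : ∀ᶠ y in l, g y < limsup g l + ε :=
      eventually_lt_of_limsup_lt (by linarith) hgu
    have h3 : limsup (fun y => max (f y) (g y)) l ≤ max (limsup f l) (limsup g l) + ε :=
      limsup_le_of_le hml.isCoboundedUnder_le (by
        filter_upwards [h1, h2] with y hy1 hy2
        exact max_le (by linarith [le_max_left (limsup f l) (limsup g l)])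
          (by linarith [le_max_right (limsup f l) (limsup g l)]))
    linarith
  · exact max_le
      (limsup_le_limsup (Eventually.of_forall fun y => le_max_left _ _)
        hfl.isCoboundedUnder_le hmu)
      (limsup_le_limsup (Eventually.of_forall fun y => le_max_right _ _)
        hgl.isCoboundedUnder_le hmu)


lemma hess_isSymm {n : ℕ} {φ : En n → ℝ} (hφ : ContDiff ℝ 2 φ) (x : En n) :
    (hess φ x).IsSymm := by
  apply Matrix.IsSymm.ext
  intro i j
  simp only [hess, Matrix.of_apply]
  rw [iteratedFDeriv_two_apply, iteratedFDeriv_two_apply]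
  simp only [Matrix.cons_val_zero, Matrix.cons_val_one, Matrix.head_cons]
  have hd1 : ∀ y, HasFDerivAt φ (fderiv ℝ φ y) y := fun y =>
    (hφ.differentiable (by norm_num)).differentiableAt.hasFDerivAt
  have hd2 : HasFDerivAt (fderiv ℝ φ) (fderiv ℝ (fderiv ℝ φ) x) x :=
    (((hφ.fderiv_right (m := 1) (by norm_num)).differentiable (by norm_num)).differentiableAt).hasFDerivAt
  exact second_derivative_symmetric hd1 hd2 _ _

lemma bdd_pair {n m : ℕ} {Ω : Set (En n)} {u : En n → Fin m → ℝ} (h : BddOn Ω u)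
    (i : Fin m) (x : En n) :
    IsBoundedUnder (· ≤ ·) (𝓝[Ω] x) (fun y => u y i) ∧
      IsBoundedUnder (· ≥ ·) (𝓝[Ω] x) (fun y => u y i) := by
  obtain ⟨M, hM⟩ := h
  constructor
  · exact ⟨M, eventually_map.2 <| eventually_mem_nhdsWithin.mono fun y hy =>
      (abs_le.1 (hM y hy i)).2⟩
  · exact ⟨-M, eventually_map.2 <| eventually_mem_nhdsWithin.mono fun y hy =>
      (abs_le.1 (hM y hy i)).1⟩

lemma lEnv_min {n m : ℕ} {Ω : Set (En n)} {u v : En n → Fin m → ℝ}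
    (hu : BddOn Ω u) (hv : BddOn Ω v) {x : En n} (hx : x ∈ Ω) (i : Fin m) :
    lEnv Ω (fun y => min (u y i) (v y i)) x
      = min (lEnv Ω (fun y => u y i) x) (lEnv Ω (fun y => v y i) x) := by
  haveI : (𝓝[Ω] x).NeBot := mem_closure_iff_nhdsWithin_neBot.mp (subset_closure hx)
  exact liminf_min_aux (bdd_pair hu i x).1 (bdd_pair hu i x).2
    (bdd_pair hv i x).1 (bdd_pair hv i x).2

lemma uEnv_max {n m : ℕ} {Ω : Set (En n)} {u v : En n → Fin m → ℝ}
    (hu : BddOn Ω u) (hv : BddOn Ω v) {x : En n} (hx : x ∈ Ω) (i : Fin m) :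
    uEnv Ω (fun y => max (u y i) (v y i)) x
      = max (uEnv Ω (fun y => u y i) x) (uEnv Ω (fun y => v y i) x) := by
  haveI : (𝓝[Ω] x).NeBot := mem_closure_iff_nhdsWithin_neBot.mp (subset_closure hx)
  exact limsup_max_aux (bdd_pair hu i x).1 (bdd_pair hu i x).2
    (bdd_pair hv i x).1 (bdd_pair hv i x).2

lemma keyF1 {n m₁ m₂ : ℕ} {Ω : Set (En n)}
    {F1 : Fin m₁ → Op n m₁ m₂} {F2 : Fin m₂ → Op n m₁ m₂}
    (hQM : BalancedQM Ω F1 F2)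
    {u1 v1 : En n → Fin m₁ → ℝ} {u2 v2 : En n → Fin m₂ → ℝ}
    (hu : SuperSub Ω F1 F2 u1 u2) (hbv1 : BddOn Ω v1) (hbv2 : BddOn Ω v2)
    {j : Fin m₁} {x : En n} (hx : x ∈ Ω) {φ : En n → ℝ} (hφ : ContDiff ℝ 2 φ)
    (hle : lEnv Ω (fun y => u1 y j) x ≤ lEnv Ω (fun y => v1 y j) x)
    (ht : TouchBelow Ω φ (lEnv Ω fun y => min (u1 y j) (v1 y j)) x) :
    0 ≤ F1 j x (fun i => min (lEnv Ω (fun y => u1 y i) x) (lEnv Ω (fun y => v1 y i) x))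
        (fun i => max (uEnv Ω (fun y => u2 y i) x) (uEnv Ω (fun y => v2 y i) x))
        (gradient φ x) (hess φ x) := by
  obtain ⟨hbu1, hbu2, hu1, -⟩ := hu
  have htu : TouchBelow Ω φ (lEnv Ω fun y => u1 y j) x := by
    obtain ⟨hφx, N, hNo, hxN, hN⟩ := ht
    refine ⟨by rw [hφx, lEnv_min hbu1 hbv1 hx, min_eq_left hle], N, hNo, hxN, ?_⟩
    intro y hy
    calc φ y < lEnv Ω (fun z => min (u1 z j) (v1 z j)) y := hN y hy
      _ ≤ lEnv Ω (fun z => u1 z j) y := by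
          rw [lEnv_min hbu1 hbv1 hy.1.2]; exact min_le_left _ _
  have h0 := hu1 j x hx φ hφ htu
  obtain ⟨qm1, qm2, -, -⟩ := hQM
  have hs : (hess φ x).IsSymm := hess_isSymm hφ x
  have s1 := qm1 j x hx (fun i => lEnv Ω (fun y => u1 y i) x)
      (fun i => uEnv Ω (fun y => u2 y i) x)
      (fun i => max (uEnv Ω (fun y => u2 y i) x) (uEnv Ω (fun y => v2 y i) x))
      (gradient φ x) (hess φ x) hs (fun i => le_max_left _ _)
  have s2 := qm2 j x hx
      (fun i => min (lEnv Ω (fun y => u1 y i) x) (lEnv Ω (fun y => v1 y i) x))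
      (fun i => lEnv Ω (fun y => u1 y i) x)
      (fun i => max (uEnv Ω (fun y => u2 y i) x) (uEnv Ω (fun y => v2 y i) x))
      (gradient φ x) (hess φ x) hs (fun i => min_le_left _ _) (min_eq_left hle)
  linarith

lemma keyF2 {n m₁ m₂ : ℕ} {Ω : Set (En n)}
    {F1 : Fin m₁ → Op n m₁ m₂} {F2 : Fin m₂ → Op n m₁ m₂}
    (hQM : BalancedQM Ω F1 F2)
    {u1 v1 : En n → Fin m₁ → ℝ} {u2 v2 : En n → Fin m₂ → ℝ}
    (hu : SuperSub Ω F1 F2 u1 u2) (hbv1 : BddOn Ω v1) (hbv2 : BddOn Ω v2)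
    {j : Fin m₂} {x : En n} (hx : x ∈ Ω) {φ : En n → ℝ} (hφ : ContDiff ℝ 2 φ)
    (hge : uEnv Ω (fun y => v2 y j) x ≤ uEnv Ω (fun y => u2 y j) x)
    (ht : TouchAbove Ω φ (uEnv Ω fun y => max (u2 y j) (v2 y j)) x) :
    F2 j x (fun i => min (lEnv Ω (fun y => u1 y i) x) (lEnv Ω (fun y => v1 y i) x))
        (fun i => max (uEnv Ω (fun y => u2 y i) x) (uEnv Ω (fun y => v2 y i) x))
        (gradient φ x) (hess φ x) ≤ 0 := by
  obtain ⟨hbu1, hbu2, -, hu2⟩ := hu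
  have htu : TouchAbove Ω φ (uEnv Ω fun y => u2 y j) x := by
    obtain ⟨hφx, N, hNo, hxN, hN⟩ := ht
    refine ⟨by rw [hφx, uEnv_max hbu2 hbv2 hx, max_eq_left hge], N, hNo, hxN, ?_⟩
    intro y hy
    calc uEnv Ω (fun z => u2 z j) y
        ≤ uEnv Ω (fun z => max (u2 z j) (v2 z j)) y := by
          rw [uEnv_max hbu2 hbv2 hy.1.2]; exact le_max_left _ _
      _ < φ y := hN y hy
  have h0 := hu2 j x hx φ hφ htu
  obtain ⟨-, -, qm3, qm4⟩ := hQM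
  have hs : (hess φ x).IsSymm := hess_isSymm hφ x
  have s1 := qm3 j x hx
      (fun i => min (lEnv Ω (fun y => u1 y i) x) (lEnv Ω (fun y => v1 y i) x))
      (fun i => lEnv Ω (fun y => u1 y i) x)
      (fun i => uEnv Ω (fun y => u2 y i) x)
      (gradient φ x) (hess φ x) hs (fun i => min_le_left _ _)
  have s2 := qm4 j x hx
      (fun i => min (lEnv Ω (fun y => u1 y i) x) (lEnv Ω (fun y => v1 y i) x))
      (fun i => uEnv Ω (fun y => u2 y i) x)
      (fun i => max (uEnv Ω (fun y => u2 y i) x) (uEnv Ω (fun y => v2 y i) x))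
      (gradient φ x) (hess φ x) hs (fun i => le_max_left _ _) (max_eq_left hge).symm
  linarith

/-- the componentwise (min, max) of two super-sub solutions of a degenerate
elliptic, balanced quasi-monotone system is again a super-sub solution. -/
theorem min_max_superSub {n m₁ m₂ : ℕ} (hm₁ : 1 ≤ m₁)
    (Ω : Set (En n)) (hΩo : IsOpen Ω) (hΩb : IsBounded Ω)
    (F1 : Fin m₁ → Op n m₁ m₂) (F2 : Fin m₂ → Op n m₁ m₂)
    (hF1c : ∀ j, OpContinuousOn Ω (F1 j)) (hF2c : ∀ j, OpContinuousOn Ω (F2 j))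
    (hF1e : ∀ j, DegElliptic Ω (F1 j)) (hF2e : ∀ j, DegElliptic Ω (F2 j))
    (hQM : BalancedQM Ω F1 F2)
    (u1 v1 : En n → Fin m₁ → ℝ) (u2 v2 : En n → Fin m₂ → ℝ)
    (hu : SuperSub Ω F1 F2 u1 u2) (hv : SuperSub Ω F1 F2 v1 v2) :
    SuperSub Ω F1 F2 (fun x j => min (u1 x j) (v1 x j)) (fun x j => max (u2 x j) (v2 x j)) := by
  have hbu1 := hu.1
  have hbu2 := hu.2.1
  have hbv1 := hv.1
  have hbv2 := hv.2.1
  have hbw1 : BddOn Ω (fun x j => min (u1 x j) (v1 x j)) := by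
    obtain ⟨M, hM⟩ := hbu1; obtain ⟨M', hM'⟩ := hbv1
    refine ⟨max M M', fun x hx i => ?_⟩
    rcases le_total (u1 x i) (v1 x i) with h | h
    · simp only [min_eq_left h]
      exact le_trans (hM x hx i) (le_max_left _ _)
    · simp only [min_eq_right h]
      exact le_trans (hM' x hx i) (le_max_right _ _)
  have hbw2 : BddOn Ω (fun x j => max (u2 x j) (v2 x j)) := by
    obtain ⟨M, hM⟩ := hbu2; obtain ⟨M', hM'⟩ := hbv2
    refine ⟨max M M', fun x hx i => ?_⟩
    rcases le_total (u2 x i) (v2 x i) with h | h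
    · simp only [max_eq_right h]
      exact le_trans (hM' x hx i) (le_max_right _ _)
    · simp only [max_eq_left h]
      exact le_trans (hM x hx i) (le_max_left _ _)
  refine ⟨hbw1, hbw2, ?_, ?_⟩
  · intro j x hx φ hφ ht
    have e1 : (fun i => lEnv Ω (fun y => min (u1 y i) (v1 y i)) x)
        = fun i => min (lEnv Ω (fun y => u1 y i) x) (lEnv Ω (fun y => v1 y i) x) :=
      funext fun i => lEnv_min hbu1 hbv1 hx i
    have e2 : (fun i => uEnv Ω (fun y => max (u2 y i) (v2 y i)) x)
        = fun i => max (uEnv Ω (fun y => u2 y i) x) (uEnv Ω (fun y => v2 y i) x) :=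
      funext fun i => uEnv_max hbu2 hbv2 hx i
    show 0 ≤ F1 j x (fun i => lEnv Ω (fun y => min (u1 y i) (v1 y i)) x)
        (fun i => uEnv Ω (fun y => max (u2 y i) (v2 y i)) x) (gradient φ x) (hess φ x)
    rw [e1, e2]
    have ht' : TouchBelow Ω φ (lEnv Ω fun y => min (u1 y j) (v1 y j)) x := ht
    rcases le_total (lEnv Ω (fun y => u1 y j) x) (lEnv Ω (fun y => v1 y j) x) with h | h
    · exact keyF1 hQM hu hbv1 hbv2 hx hφ h ht'
    · have ht'' : TouchBelow Ω φ (lEnv Ω fun y => min (v1 y j) (u1 y j)) x := by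
        have : (fun y => min (v1 y j) (u1 y j)) = fun y => min (u1 y j) (v1 y j) :=
          funext fun y => min_comm _ _
        rw [this]; exact ht'
      have key := keyF1 hQM hv hbu1 hbu2 hx hφ h ht''
      have c1 : (fun i => min (lEnv Ω (fun y => v1 y i) x) (lEnv Ω (fun y => u1 y i) x))
          = fun i => min (lEnv Ω (fun y => u1 y i) x) (lEnv Ω (fun y => v1 y i) x) :=
        funext fun i => min_comm _ _
      have c2 : (fun i => max (uEnv Ω (fun y => v2 y i) x) (uEnv Ω (fun y => u2 y i) x))
          = fun i => max (uEnv Ω (fun y => u2 y i) x) (uEnv Ω (fun y => v2 y i) x) :=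
        funext fun i => max_comm _ _
      rw [c1, c2] at key
      exact key
  · intro j x hx φ hφ ht
    have e1 : (fun i => lEnv Ω (fun y => min (u1 y i) (v1 y i)) x)
        = fun i => min (lEnv Ω (fun y => u1 y i) x) (lEnv Ω (fun y => v1 y i) x) :=
      funext fun i => lEnv_min hbu1 hbv1 hx i
    have e2 : (fun i => uEnv Ω (fun y => max (u2 y i) (v2 y i)) x)
        = fun i => max (uEnv Ω (fun y => u2 y i) x) (uEnv Ω (fun y => v2 y i) x) :=
      funext fun i => uEnv_max hbu2 hbv2 hx i
    show F2 j x (fun i => lEnv Ω (fun y => min (u1 y i) (v1 y i)) x)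
        (fun i => uEnv Ω (fun y => max (u2 y i) (v2 y i)) x) (gradient φ x) (hess φ x) ≤ 0
    rw [e1, e2]
    have ht' : TouchAbove Ω φ (uEnv Ω fun y => max (u2 y j) (v2 y j)) x := ht
    rcases le_total (uEnv Ω (fun y => v2 y j) x) (uEnv Ω (fun y => u2 y j) x) with h | h
    · exact keyF2 hQM hu hbv1 hbv2 hx hφ h ht'
    · have ht'' : TouchAbove Ω φ (uEnv Ω fun y => max (v2 y j) (u2 y j)) x := by
        have : (fun y => max (v2 y j) (u2 y j)) = fun y => max (u2 y j) (v2 y j) :=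
          funext fun y => max_comm _ _
        rw [this]; exact ht'
      have key := keyF2 hQM hv hbu1 hbu2 hx hφ h ht''
      have c1 : (fun i => min (lEnv Ω (fun y => v1 y i) x) (lEnv Ω (fun y => u1 y i) x))
          = fun i => min (lEnv Ω (fun y => u1 y i) x) (lEnv Ω (fun y => v1 y i) x) :=
        funext fun i => min_comm _ _
      have c2 : (fun i => max (uEnv Ω (fun y => v2 y i) x) (uEnv Ω (fun y => u2 y i) x))
          = fun i => max (uEnv Ω (fun y => u2 y i) x) (uEnv Ω (fun y => v2 y i) x) :=
        funext fun i => max_comm _ _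
      rw [c1, c2] at key
      exact key
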